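/- arXiv:2304.02789 — 2 statements merged into one kernel-verified Lean document; each statement's English description precedes it below -/
import Mathlib

section
/- Let p be an odd prime and x a p-adic integer with x \equiv 1 (mod p) (i.e., v_p(x-1) \ge 1). Then log_p(x) \equiv (x^p - 1)/p (mod p), i.e., p \cdot log_p(x) \equiv x^p - 1 (mod p^2). -/
open IsUltrametricDist Finset

/-- The `p`-adic logarithm, defined by the usual power series around `1`. -/
noncomputable def plog (p : ℕ) [Fact p.Prime] (x : ℚ_[p]) : ℚ_[p] :=
  ∑' n : ℕ, (-1) ^ n * (x - 1) ^ (n + 1) / (n + 1)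

section aux

variable {p : ℕ} [Fact p.Prime]

lemma padicValNat_succ_le (p : ℕ) [hp : Fact p.Prime] (n : ℕ) : padicValNat p (n+1) ≤ n := by
  have h1 : p ^ padicValNat p (n+1) ≤ n + 1 :=
    Nat.le_of_dvd (Nat.succ_pos n) pow_padicValNat_dvd
  by_contra h
  push_neg at h
  have h3 : p ^ (n+1) ≤ p ^ padicValNat p (n+1) := Nat.pow_le_pow_right hp.out.pos h
  have h2 : n + 1 < p ^ (n+1) := (Nat.lt_pow_self hp.out.one_lt : n + 1 < p ^ (n+1))
  omega

lemma norm_natCast_succ (n : ℕ) :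
    ‖((n+1 : ℕ) : ℚ_[p])‖ = (p : ℝ) ^ (-(padicValNat p (n+1) : ℤ)) := by
  rw [Padic.norm_eq_zpow_neg_valuation (by exact_mod_cast Nat.succ_ne_zero n), Padic.valuation_natCast]

lemma norm_natCast_succ_ge (n : ℕ) : ((n : ℝ)+1)⁻¹ ≤ ‖((n+1 : ℕ) : ℚ_[p])‖ := by
  have hp0 : (0:ℝ) < (p:ℝ) := by exact_mod_cast (Fact.out : p.Prime).pos
  rw [norm_natCast_succ]
  have h1 : (p : ℝ) ^ (padicValNat p (n+1)) ≤ (n : ℝ) + 1 := by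
    exact_mod_cast Nat.le_of_dvd (Nat.succ_pos n) pow_padicValNat_dvd
  rw [zpow_neg, zpow_natCast]
  exact inv_anti₀ (pow_pos hp0 _) h1

lemma padic_norm_sub_le_max (a b : ℚ_[p]) : ‖a - b‖ ≤ max ‖a‖ ‖b‖ := by
  simpa [sub_eq_add_neg] using Padic.nonarchimedean a (-b)

lemma key_term_bound (hodd : Odd p) (t : ℚ_[p]) (ht : ‖t‖ ≤ ((p : ℝ))⁻¹) (n : ℕ) :
    ‖(p : ℚ_[p]) * ((-1) ^ n * t ^ (n+1) / (n+1)) - (p.choose (n+1) : ℚ_[p]) * t ^ (n+1)‖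
      ≤ (p : ℝ) ^ (-2 : ℤ) := by
  have hp := (Fact.out : p.Prime)
  have hp1 : (1:ℝ) < p := by exact_mod_cast hp.one_lt
  have hp0 : (0:ℝ) < p := by positivity
  have hpos : (0:ℝ) < (p : ℝ) ^ (-2 : ℤ) := by positivity
  have htk : ∀ k : ℕ, ‖t ^ k‖ ≤ (p : ℝ) ^ (-(k:ℤ)) := by
    intro k
    rw [norm_pow, zpow_neg, zpow_natCast, ← inv_pow]
    exact pow_le_pow_left₀ (norm_nonneg t) ht k
  rcases eq_or_ne n 0 with rfl | hn0
  · have h0 : (p : ℚ_[p]) * ((-1) ^ 0 * t ^ (0+1) / ((0:ℕ)+1)) -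
        (p.choose (0+1) : ℚ_[p]) * t ^ (0+1) = 0 := by
      simp
    rw [h0, norm_zero]
    exact hpos.le
  rcases eq_or_ne (n+1) p with hnp | hnp
  · -- n + 1 = p
    have hneg : ((-1 : ℚ_[p])) ^ n = 1 := by
      apply Even.neg_one_pow
      rcases hodd with ⟨m, hm⟩
      refine ⟨m, by omega⟩
    have hpne : (p : ℚ_[p]) ≠ 0 := Nat.cast_ne_zero.mpr hp.pos.ne'
    have hcast : ((n : ℚ_[p]) + 1) = (p : ℚ_[p]) := by
      have : ((n+1 : ℕ) : ℚ_[p]) = (p : ℚ_[p]) := congrArg (fun m : ℕ => (m : ℚ_[p])) hnp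
      push_cast at this
      exact this
    rw [hnp, Nat.choose_self, hneg, one_mul, Nat.cast_one, one_mul, hcast,
      mul_div_cancel₀ _ hpne, sub_self, norm_zero]
    exact hpos.le
  · -- generic case : n ≥ 1, n + 1 ≠ p
    refine le_trans (padic_norm_sub_le_max _ _) (max_le ?_ ?_)
    · -- first part
      have hval : padicValNat p (n+1) ≤ n := padicValNat_succ_le p n
      have h1 : ‖(p : ℚ_[p]) * ((-1) ^ n * t ^ (n+1) / (n+1))‖
          = (p:ℝ)⁻¹ * (‖t ^ (n+1)‖ * ((p:ℝ) ^ ((padicValNat p (n+1) : ℤ)))) := by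
        have hcast : ((n : ℚ_[p]) + 1) = ((n+1 : ℕ) : ℚ_[p]) := by push_cast; ring
        rw [norm_mul, norm_div, norm_mul, norm_pow, norm_neg, norm_one, one_pow, one_mul,
          Padic.norm_p, hcast, norm_natCast_succ, div_eq_mul_inv, ← zpow_neg, neg_neg]
      rw [h1]
      calc (p:ℝ)⁻¹ * (‖t ^ (n+1)‖ * ((p:ℝ) ^ ((padicValNat p (n+1) : ℤ))))
          ≤ (p:ℝ)⁻¹ * ((p:ℝ) ^ (-((n:ℤ)+1)) * (p:ℝ) ^ ((n:ℤ))) := by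
            apply mul_le_mul_of_nonneg_left _ (by positivity)
            apply mul_le_mul (by exact_mod_cast htk (n+1))
              (by exact zpow_le_zpow_right₀ hp1.le (by exact_mod_cast hval))
              (by positivity) (by positivity)
        _ = (p:ℝ) ^ (-2 : ℤ) := by
            rw [← zpow_neg_one, ← zpow_add₀ (ne_of_gt hp0), ← zpow_add₀ (ne_of_gt hp0)]
            norm_num
    · -- second part
      rcases lt_or_ge (n+1) p with hlt | hge
      · have hdvd : (p:ℤ) ∣ (p.choose (n+1) : ℤ) := by
          exact_mod_cast hp.dvd_choose_self (Nat.succ_ne_zero n) hlt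
        have hnorm : ‖((p.choose (n+1) : ℤ) : ℚ_[p])‖ ≤ (p : ℝ) ^ (-(1:ℕ) : ℤ) :=
          (Padic.norm_int_le_pow_iff_dvd _ _).mpr (by simpa using hdvd)
        rw [norm_mul]
        calc ‖(p.choose (n+1) : ℚ_[p])‖ * ‖t ^ (n+1)‖
            ≤ (p:ℝ) ^ (-(1:ℤ)) * (p:ℝ) ^ (-((n:ℤ)+1)) := by
              apply mul_le_mul (by exact_mod_cast hnorm) (by exact_mod_cast htk (n+1))
                (norm_nonneg _) (by positivity)
          _ ≤ (p:ℝ) ^ (-2 : ℤ) := by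
              rw [← zpow_add₀ (ne_of_gt hp0)]
              apply zpow_le_zpow_right₀ hp1.le
              omega
      · have : p < n + 1 := lt_of_le_of_ne hge (Ne.symm hnp)
        rw [Nat.choose_eq_zero_of_lt this]
        simp only [Nat.cast_zero, zero_mul, norm_zero]
        positivity

end aux

theorem padic_log_pow_congruence (p : ℕ) [Fact p.Prime] (hodd : Odd p)
    (x : ℤ_[p]) (hx : ‖x - 1‖ ≤ ((p : ℝ))⁻¹) :
    ‖(p : ℚ_[p]) * plog p (x : ℚ_[p]) - ((x : ℚ_[p]) ^ p - 1)‖ ≤ (p : ℝ) ^ (-2 : ℤ) := by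
  have hp := (Fact.out : p.Prime)
  have hp1 : (1:ℝ) < p := by exact_mod_cast hp.one_lt
  set t : ℚ_[p] := (x : ℚ_[p]) - 1 with ht_def
  have ht : ‖t‖ ≤ ((p : ℝ))⁻¹ := by
    rw [ht_def]
    have : ((x - 1 : ℤ_[p]) : ℚ_[p]) = (x : ℚ_[p]) - 1 := by push_cast; ring
    rw [← this, PadicInt.padic_norm_e_of_padicInt]
    exact hx
  have ht1 : ‖t‖ < 1 := lt_of_le_of_lt ht (by
    rw [inv_lt_one_iff₀]; right; exact hp1)
  -- summability of the log series
  have hS1 : Summable (fun n : ℕ => (-1 : ℚ_[p]) ^ n * t ^ (n + 1) / (n + 1)) := by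
    apply Summable.of_norm_bounded (g := fun n : ℕ => ((n:ℝ)+1) * ‖t‖ ^ (n+1))
    · have h1 : Summable (fun n : ℕ => (n:ℝ) * ‖t‖ ^ n) := by
        simpa using summable_pow_mul_geometric_of_norm_lt_one 1 (r := ‖t‖) (by simpa using ht1)
      have h2 : Summable (fun n : ℕ => ‖t‖ ^ n) := summable_geometric_of_lt_one (norm_nonneg t) ht1
      have := ((h1.add h2).mul_left ‖t‖)
      apply this.congr
      intro n
      ring
    · intro n
      rw [norm_div, norm_mul, norm_pow, norm_neg, norm_one, one_pow, one_mul, norm_pow]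
      rw [div_eq_mul_inv, mul_comm ((n:ℝ)+1)]
      apply mul_le_mul_of_nonneg_left _ (by positivity)
      have hcast : ((n : ℚ_[p]) + 1) = ((n+1 : ℕ) : ℚ_[p]) := by push_cast; ring
      rw [hcast]
      have h := norm_natCast_succ_ge (p := p) n
      calc ‖((n+1 : ℕ) : ℚ_[p])‖⁻¹ ≤ (((n:ℝ)+1)⁻¹)⁻¹ :=
            inv_anti₀ (by positivity) h
        _ = (n:ℝ)+1 := by rw [inv_inv]
  have hS2 : Summable (fun n : ℕ => (p.choose (n+1) : ℚ_[p]) * t ^ (n+1)) := by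
    apply summable_of_ne_finset_zero (s := Finset.range p)
    intro n hn
    rw [Finset.mem_range, not_lt] at hn
    rw [Nat.choose_eq_zero_of_lt (by omega), Nat.cast_zero, zero_mul]
  -- binomial expansion
  have hbin : (x : ℚ_[p]) ^ p - 1 = ∑' n : ℕ, (p.choose (n+1) : ℚ_[p]) * t ^ (n+1) := by
    rw [tsum_eq_sum (s := Finset.range p) (by
      intro n hn
      rw [Finset.mem_range, not_lt] at hn
      rw [Nat.choose_eq_zero_of_lt (by omega), Nat.cast_zero, zero_mul])]
    have hx1 : (x : ℚ_[p]) = t + 1 := by rw [ht_def]; ring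
    rw [hx1, add_pow]
    rw [Finset.sum_range_succ']
    simp only [pow_zero, one_pow, Nat.choose_zero_right, Nat.cast_one, mul_one, one_mul]
    rw [add_sub_cancel_right]
    apply Finset.sum_congr rfl
    intro k _
    ring
  -- rewrite the difference as a single tsum
  have hlog : (p : ℚ_[p]) * plog p (x : ℚ_[p])
      = ∑' n : ℕ, (p : ℚ_[p]) * ((-1) ^ n * t ^ (n+1) / (n+1)) := by
    rw [plog, tsum_mul_left]
  rw [hlog, hbin, ← Summable.tsum_sub (hS1.mul_left (p : ℚ_[p])) hS2]
  exact norm_tsum_le_of_forall_le_of_nonneg (by positivity) (fun n => key_term_bound hodd t ht n)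
end

section
/- Let p \equiv 5 (mod 8) be prime. Then 2 is a quadratic non-residue mod p, and the Eisenstein congruence holds: -2 F(2) \equiv H_{(p-1)/2} (mod p), where F(2) = (2^{p-1}-1)/p is the Fermat quotient of 2 and H_{(p-1)/2} = \sum_{j=1}^{(p-1)/2} 1/j with inverses mod p. -/
open Finset

private lemma choose_pred_cast (p : ℕ) [hp : Fact p.Prime] :
    ∀ j, j ≤ p - 1 → ((Nat.choose (p - 1) j : ZMod p)) = (-1) ^ j := by
  intro j
  induction j with
  | zero => intro _; simp
  | succ j ih =>
    intro hj
    have hple := hp.out.two_le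
    have hj' : j ≤ p - 1 := Nat.le_of_succ_le hj
    have hc : Nat.choose p (j + 1) = Nat.choose (p - 1) j + Nat.choose (p - 1) (j + 1) := by
      conv_lhs => rw [← Nat.succ_pred_eq_of_pos hp.out.pos]
      exact Nat.choose_succ_succ _ _
    have hdvd : p ∣ Nat.choose p (j + 1) :=
      Nat.Prime.dvd_choose_self hp.out (Nat.succ_ne_zero j) (by omega)
    have h0 : ((Nat.choose p (j + 1) : ℕ) : ZMod p) = 0 :=
      (ZMod.natCast_eq_zero_iff _ _).mpr hdvd
    rw [hc] at h0
    push_cast at h0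
    rw [ih hj'] at h0
    have : ((Nat.choose (p - 1) (j + 1) : ℕ) : ZMod p) = -(-1) ^ j := by
      linear_combination h0
    rw [this, pow_succ]
    ring

theorem eisenstein_congruence_five_mod_eight (p : ℕ) [Fact p.Prime] (hp8 : p % 8 = 5) :
    ¬ IsSquare (2 : ZMod p) ∧
    (-2 : ZMod p) * (((2 ^ (p - 1) - 1) / p : ℤ) : ZMod p) =
      ∑ j ∈ Finset.Icc 1 ((p - 1) / 2), (j : ZMod p)⁻¹ := by
  have hp : p.Prime := Fact.out
  have hple := hp.two_le
  have hp5 : 5 ≤ p := by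
    rcases Nat.lt_or_ge p 8 with h | h
    · omega
    · omega
  have hp2 : p ≠ 2 := by omega
  have hodd : p % 2 = 1 := by omega
  set m := (p - 1) / 2 with hm
  have h2m : 2 * m = p - 1 := by omega
  -- 2 is invertible in ZMod p
  have h2ne : (2 : ZMod p) ≠ 0 := by
    intro h
    have h' : ((2 : ℕ) : ZMod p) = 0 := by push_cast; exact h
    have := Nat.le_of_dvd (by norm_num) ((ZMod.natCast_eq_zero_iff 2 p).mp h')
    omega
  constructor
  · rw [ZMod.exists_sq_eq_two_iff hp2]
    omega
  -- the Fermat quotient as a natural number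
  have hone_le : 1 ≤ 2 ^ (p - 1) := Nat.one_le_two_pow
  have hdvdq : p ∣ 2 ^ (p - 1) - 1 := by
    have h2z : (2 : ZMod p) ^ (p - 1) = 1 := ZMod.pow_card_sub_one_eq_one h2ne
    have : (((2 ^ (p - 1) - 1 : ℕ)) : ZMod p) = 0 := by
      push_cast [hone_le]
      rw [h2z]; ring
    exact (ZMod.natCast_eq_zero_iff _ _).mp this
  set q : ℕ := (2 ^ (p - 1) - 1) / p with hqdef
  have hq : p * q = 2 ^ (p - 1) - 1 := Nat.mul_div_cancel' hdvdq
  -- the integer cast in the statement equals q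
  have hcastq : (((2 ^ (p - 1) - 1) / p : ℤ) : ZMod p) = ((q : ℕ) : ZMod p) := by
    have h1 : ((2 : ℤ) ^ (p - 1) - 1) = ((2 ^ (p - 1) - 1 : ℕ) : ℤ) := by
      push_cast [hone_le]; ring
    have h2 : ((2 ^ (p - 1) - 1) / p : ℤ) = ((q : ℕ) : ℤ) := by
      rw [h1, hqdef, ← Int.natCast_ediv]
    rw [h2]
    push_cast
    ring
  -- c k = choose p k / p
  set c : ℕ → ℕ := fun k => Nat.choose p k / p with hcdef
  have hc : ∀ k ∈ Icc 1 (p - 1), p * c k = Nat.choose p k := by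
    intro k hk
    rw [mem_Icc] at hk
    exact Nat.mul_div_cancel' (hp.dvd_choose_self (by omega) (by omega))
  have hck : ∀ k ∈ Icc 1 (p - 1), c k * k = Nat.choose (p - 1) (k - 1) := by
    intro k hk
    have hmem := hk
    rw [mem_Icc] at hk
    obtain ⟨j, rfl⟩ : ∃ j, k = j + 1 := ⟨k - 1, by omega⟩
    have key : Nat.choose p (j + 1) * (j + 1) = p * Nat.choose (p - 1) j := by
      have h := Nat.add_one_mul_choose_eq (p - 1) j
      simp only [Nat.succ_eq_add_one, Nat.sub_add_cancel (by omega : 1 ≤ p)] at h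
      exact h.symm
    have : p * (c (j + 1) * (j + 1)) = p * Nat.choose (p - 1) j := by
      rw [← Nat.mul_assoc, hc _ hmem, key]
    have := Nat.eq_of_mul_eq_mul_left hp.pos this
    simpa using this
  -- sum of middle binomial coefficients
  have hsum_choose : ∑ k ∈ Icc 1 (p - 1), Nat.choose p k = 2 ^ p - 2 := by
    have hset : Finset.range (p + 1) = insert 0 (insert p (Icc 1 (p - 1))) := by
      ext x
      simp only [Finset.mem_range, Finset.mem_insert, Finset.mem_Icc]
      omega
    have h0 : (0 : ℕ) ∉ insert p (Icc 1 (p - 1)) := by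
      simp only [Finset.mem_insert, Finset.mem_Icc]
      omega
    have hpn : p ∉ Icc 1 (p - 1) := by
      simp only [Finset.mem_Icc]
      omega
    have := Nat.sum_range_choose p
    rw [hset, Finset.sum_insert h0, Finset.sum_insert hpn, Nat.choose_zero_right,
      Nat.choose_self] at this
    omega
  have h2p : 2 ^ p = 2 * 2 ^ (p - 1) := by
    conv_lhs => rw [show p = (p - 1) + 1 by omega]
    rw [pow_succ]
    ring
  have hsc : ∑ k ∈ Icc 1 (p - 1), c k = 2 * q := by
    have hps : p * ∑ k ∈ Icc 1 (p - 1), c k = p * (2 * q) := by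
      rw [Finset.mul_sum]
      rw [Finset.sum_congr rfl hc, hsum_choose]
      have : p * (2 * q) = 2 * (p * q) := by ring
      rw [this, hq]
      omega
    exact Nat.eq_of_mul_eq_mul_left hp.pos hps
  -- cast each term
  have hne : ∀ k ∈ Icc 1 (p - 1), ((k : ℕ) : ZMod p) ≠ 0 := by
    intro k hk
    rw [mem_Icc] at hk
    intro h
    have := (ZMod.natCast_eq_zero_iff k p).mp h
    have := Nat.le_of_dvd (by omega) this
    omega
  have hterm : ∀ k ∈ Icc 1 (p - 1), ((c k : ℕ) : ZMod p) = (-1) ^ (k - 1) * (k : ZMod p)⁻¹ := by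
    intro k hk
    have hkne := hne k hk
    have hkmem := hk
    rw [mem_Icc] at hk
    have h1 : ((c k : ℕ) : ZMod p) * (k : ZMod p) = (-1) ^ (k - 1) := by
      have := hck k hkmem
      have hcast : (((c k * k : ℕ)) : ZMod p) = ((Nat.choose (p - 1) (k - 1) : ℕ) : ZMod p) := by
        rw [this]
      push_cast at hcast
      rw [hcast]
      exact choose_pred_cast p (k - 1) (by omega)
    rw [eq_mul_inv_iff_mul_eq₀ hkne]
    exact h1
  -- the harmonic sum over the full range is zero
  have hS : ∑ k ∈ Icc 1 (p - 1), ((k : ZMod p))⁻¹ = 0 := by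
    have hrefl : ∑ k ∈ Icc 1 (p - 1), ((k : ZMod p))⁻¹
        = ∑ k ∈ Icc 1 (p - 1), (((p - k : ℕ) : ZMod p))⁻¹ := by
      refine Finset.sum_nbij' (fun k => p - k) (fun k => p - k) ?_ ?_ ?_ ?_ ?_
      · intro a ha; simp only [mem_Icc] at ha ⊢; omega
      · intro a ha; simp only [mem_Icc] at ha ⊢; omega
      · intro a ha; simp only [mem_Icc] at ha; omega
      · intro a ha; simp only [mem_Icc] at ha; omega
      · intro a ha
        simp only [mem_Icc] at ha
        congr 2
        omega
    have hneg : ∀ k ∈ Icc 1 (p - 1), (((p - k : ℕ) : ZMod p))⁻¹ = -((k : ZMod p))⁻¹ := by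
      intro k hk
      rw [mem_Icc] at hk
      have : ((p - k : ℕ) : ZMod p) = -(k : ZMod p) := by
        rw [Nat.cast_sub (by omega : k ≤ p), ZMod.natCast_self]
        ring
      rw [this, inv_neg]
    rw [Finset.sum_congr rfl hneg, Finset.sum_neg_distrib] at hrefl
    have h2S : (2 : ZMod p) * ∑ k ∈ Icc 1 (p - 1), ((k : ZMod p))⁻¹ = 0 := by
      linear_combination hrefl
    rcases mul_eq_zero.mp h2S with h | h
    · exact absurd h h2ne
    · exact h
  -- even part reindexing
  have heven : ∑ k ∈ (Icc 1 (p - 1)).filter (fun k => k % 2 = 0), (2 : ZMod p) * ((k : ZMod p))⁻¹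
      = ∑ j ∈ Icc 1 m, ((j : ZMod p))⁻¹ := by
    refine Finset.sum_nbij' (fun k => k / 2) (fun j => 2 * j) ?_ ?_ ?_ ?_ ?_
    · intro a ha
      simp only [mem_filter, mem_Icc] at ha ⊢
      omega
    · intro a ha
      simp only [mem_filter, mem_Icc] at ha ⊢
      omega
    · intro a ha
      simp only [mem_filter, mem_Icc] at ha
      omega
    · intro a ha
      simp only [mem_Icc] at ha
      omega
    · intro a ha
      simp only [mem_filter, mem_Icc] at ha
      have hdcast : ((a : ℕ) : ZMod p) = 2 * ((a / 2 : ℕ) : ZMod p) := by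
        have : a = 2 * (a / 2) := by omega
        conv_lhs => rw [this]
        push_cast
        ring
      rw [hdcast, mul_inv_rev]
      -- goal: 2 * ((a/2)⁻¹ * 2⁻¹) = (a/2)⁻¹
      have hane : ((a / 2 : ℕ) : ZMod p) ≠ 0 := by
        intro h
        have := (ZMod.natCast_eq_zero_iff (a / 2) p).mp h
        have := Nat.le_of_dvd (by omega) this
        omega
      field_simp
  -- alternating sum identity
  have halt : ∑ k ∈ Icc 1 (p - 1), (-1 : ZMod p) ^ (k - 1) * ((k : ZMod p))⁻¹
      = - ∑ j ∈ Icc 1 m, ((j : ZMod p))⁻¹ := by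
    have hsplit : ∀ k ∈ Icc 1 (p - 1),
        ((k : ZMod p))⁻¹ - (-1 : ZMod p) ^ (k - 1) * ((k : ZMod p))⁻¹
          = if k % 2 = 0 then (2 : ZMod p) * ((k : ZMod p))⁻¹ else 0 := by
      intro k hk
      rw [mem_Icc] at hk
      rcases Nat.even_or_odd k with he | ho
      · have h2 : k % 2 = 0 := Nat.even_iff.mp he
        have hk1 : (k - 1) % 2 = 1 := by omega
        rw [if_pos h2, Odd.neg_one_pow (Nat.odd_iff.mpr hk1)]
        ring
      · have h2 : k % 2 = 1 := Nat.odd_iff.mp ho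
        have hk1 : (k - 1) % 2 = 0 := by omega
        rw [if_neg (by omega), Even.neg_one_pow (Nat.even_iff.mpr hk1)]
        ring
    have hdiff : ∑ k ∈ Icc 1 (p - 1),
        (((k : ZMod p))⁻¹ - (-1 : ZMod p) ^ (k - 1) * ((k : ZMod p))⁻¹)
        = ∑ j ∈ Icc 1 m, ((j : ZMod p))⁻¹ := by
      rw [Finset.sum_congr rfl hsplit, ← Finset.sum_filter]
      exact heven
    rw [Finset.sum_sub_distrib, hS] at hdiff
    linear_combination -hdiff
  -- put everything together
  rw [hcastq]
  have hfinal : ((2 * q : ℕ) : ZMod p) = - ∑ j ∈ Icc 1 m, ((j : ZMod p))⁻¹ := by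
    rw [← hsc]
    push_cast
    rw [Finset.sum_congr rfl hterm]
    exact halt
  push_cast at hfinal
  linear_combination -hfinal
end
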